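/- Let R be a commutative Artinian local ring with maximal ideal 𝔪 and residue field k = R/𝔪, and suppose R is injective as a module over itself (i.e., R is a zero-dimensional Gorenstein local ring). Then: (1) the socle R[𝔪] := { x ∈ R : 𝔪·x = 0 } is a principal ideal of R; (2) for any two nonzero R-linear maps f, g : k → R there exists a unit u ∈ R^× with f = u·g (equivalently, the set (Hom_R(k, R) ∖ {0})/R^× has exactly one element). -/

import Mathlib

open IsLocalRing

private lemma aux_inj {R : Type*} [CommRing R] [IsLocalRing R]
    (f : ResidueField R →ₗ[R] R) (hf : f ≠ 0) : Function.Injective f := by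
  rw [← LinearMap.ker_eq_bot, LinearMap.ker_eq_bot']
  intro x hfx
  by_contra hx
  apply hf
  ext y
  obtain ⟨t, rfl⟩ := Ideal.Quotient.mk_surjective y
  obtain ⟨r, rfl⟩ := Ideal.Quotient.mk_surjective x
  have hr : r ∉ maximalIdeal R := fun h => hx (Ideal.Quotient.eq_zero_iff_mem.mpr h)
  have hu : IsUnit r := IsLocalRing.notMem_maximalIdeal.mp hr
  obtain ⟨u, rfl⟩ := hu
  have key : (Ideal.Quotient.mk (maximalIdeal R)) t
      = (t * ↑u⁻¹) • (Ideal.Quotient.mk (maximalIdeal R)) (↑u : R) := by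
    have h1 : (t * ↑u⁻¹) • (Ideal.Quotient.mk (maximalIdeal R)) (↑u : R)
        = (Ideal.Quotient.mk (maximalIdeal R)) ((t * ↑u⁻¹) * ↑u) := rfl
    rw [h1, mul_assoc, Units.inv_mul, mul_one]
  rw [key]; exact (f.map_smul (t * ↑u⁻¹) (Ideal.Quotient.mk (maximalIdeal R) (↑u : R))).trans (by rw [hfx, smul_zero]; rfl)

private lemma aux_unit {R : Type*} [CommRing R] [IsLocalRing R] [Module.Injective R R]
    (f g : ResidueField R →ₗ[R] R) (hf : f ≠ 0) (hg : g ≠ 0) :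
    ∃ u : Rˣ, f = (u : R) • g := by
  obtain ⟨h₁, hh₁⟩ := Module.Injective.out g (aux_inj g hg) f
  obtain ⟨h₂, hh₂⟩ := Module.Injective.out f (aux_inj f hf) g
  have e₁ : ∀ x, f x = h₁ 1 • g x := by
    intro x
    rw [← hh₁ x]
    conv_lhs => rw [show g x = (g x) • (1 : R) from (mul_one _).symm]
    rw [map_smul, smul_eq_mul, smul_eq_mul, mul_comm]
  have e₂ : ∀ x, g x = h₂ 1 • f x := by
    intro x
    rw [← hh₂ x]
    conv_lhs => rw [show f x = (f x) • (1 : R) from (mul_one _).symm]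
    rw [map_smul, smul_eq_mul, smul_eq_mul, mul_comm]
  have key : f ((1 : ResidueField R) - (h₁ 1 * h₂ 1) • (1 : ResidueField R)) = 0 := by
    rw [map_sub, map_smul, smul_eq_mul]
    have := e₁ 1
    rw [e₂ 1, smul_smul, smul_eq_mul] at this
    rw [← this, sub_self]
  have key2 : (1 : ResidueField R) - (h₁ 1 * h₂ 1) • (1 : ResidueField R) = 0 := by
    apply aux_inj f hf
    rw [key, map_zero]
  -- hence 1 - h₁ 1 * h₂ 1 ∈ 𝔪
  have hm : (1 : R) - h₁ 1 * h₂ 1 ∈ maximalIdeal R := by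
    have : ((Ideal.Quotient.mk (maximalIdeal R)) ((1:R) - h₁ 1 * h₂ 1)) = 0 := by
      rw [map_sub, map_one]
      have h3 : ((Ideal.Quotient.mk (maximalIdeal R)) (h₁ 1 * h₂ 1))
          = (h₁ 1 * h₂ 1) • (1 : ResidueField R) := by
        have h4 := Submodule.Quotient.mk_smul (maximalIdeal R) (h₁ 1 * h₂ 1) (1 : R)
        simp only [smul_eq_mul, mul_one] at h4; exact h4
      rw [h3]; exact key2
    exact Ideal.Quotient.eq_zero_iff_mem.mp this
  have hnm : h₁ 1 * h₂ 1 ∉ maximalIdeal R := by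
    intro h
    have : (1 : R) ∈ maximalIdeal R := by
      have h5 := (maximalIdeal R).add_mem hm h
      rw [sub_add_cancel] at h5
      exact h5
    exact (maximalIdeal R).ne_top_iff_one.mp (Ideal.IsMaximal.ne_top inferInstance) this
  have hu : IsUnit (h₁ 1 * h₂ 1) := IsLocalRing.notMem_maximalIdeal.mp hnm
  have hu1 : IsUnit (h₁ 1) := isUnit_of_mul_isUnit_left hu
  refine ⟨hu1.unit, ?_⟩
  ext x
  rw [LinearMap.smul_apply, hu1.unit_spec]
  exact e₁ x

theorem stark_systems_stmt13 (R : Type*) [CommRing R] [IsArtinianRing R] [IsLocalRing R]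
    [Module.Injective R R] :
    (Submodule.torsionBySet R R (IsLocalRing.maximalIdeal R : Set R)).IsPrincipal ∧
      ∀ f g : IsLocalRing.ResidueField R →ₗ[R] R, f ≠ 0 → g ≠ 0 →
        ∃ u : Rˣ, f = (u : R) • g := by
  refine ⟨?_, fun f g hf hg => aux_unit f g hf hg⟩
  set S := Submodule.torsionBySet R R (IsLocalRing.maximalIdeal R : Set R) with hS
  by_cases hbot : S = ⊥
  · exact ⟨⟨0, by rw [hbot, Submodule.span_zero_singleton]⟩⟩
  · obtain ⟨s, hsS, hs0⟩ := Submodule.exists_mem_ne_zero_of_ne_bot hbot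
    -- map k → R sending mk t to t * s
    have hann : ∀ x ∈ S, (maximalIdeal R : Submodule R R) ≤ LinearMap.ker (LinearMap.toSpanSingleton R R x) := by
      intro x hx a ha
      have := (Submodule.mem_torsionBySet_iff _ _).mp hx ⟨a, ha⟩
      simpa [LinearMap.mem_ker] using this
    set F : ∀ x ∈ S, ResidueField R →ₗ[R] R := fun x hx =>
      Submodule.liftQ (maximalIdeal R) (LinearMap.toSpanSingleton R R x) (hann x hx) with hF
    have hFapp : ∀ (x) (hx : x ∈ S) (t : R),
        F x hx (Ideal.Quotient.mk (maximalIdeal R) t) = t * x := fun x hx t => rfl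
    have hFne : ∀ (x) (hx : x ∈ S), x ≠ 0 → F x hx ≠ 0 := by
      intro x hx hxne h0
      apply hxne
      have := hFapp x hx 1
      rw [h0] at this
      simpa using this.symm.trans (LinearMap.zero_apply (Ideal.Quotient.mk (maximalIdeal R) (1:R) : ResidueField R))
    refine ⟨⟨s, ?_⟩⟩
    apply le_antisymm
    · intro t ht
      by_cases ht0 : t = 0
      · simp [ht0]
      · obtain ⟨u, hu⟩ := aux_unit (F t ht) (F s hsS) (hFne t ht ht0) (hFne s hsS hs0)
        have a1 := hFapp t ht 1
        have a2 := hFapp s hsS 1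
        rw [one_mul] at a1 a2
        have htu : t = (u : R) • s := by
          rw [← a1, hu]; exact (LinearMap.smul_apply (u:R) (F s hsS) _).trans (by rw [a2])
        rw [htu]
        exact Submodule.smul_mem _ _ (Submodule.mem_span_singleton_self s)
    · rw [Submodule.span_le, Set.singleton_subset_iff]
      exact hsS
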